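/- The cycletree numbering assigns to the nodes of a tree of size n, starting from counter c, exactly the set of numbers {c, c+1, …, c+n−1}: the multiset of num-labels of the labeled tree produced by any of the four modes (root, pre, in, post) on t with starting counter c equals the multiset {c, …, c + size t − 1}. In particular all assigned numbers are distinct. -/
import Mathlib

namespace Retreet

inductive BTree where
  | nil : BTree
  | node : BTree → BTree → BTree

inductive LTree where
  | lnil : LTree
  | lnode : Nat → LTree → LTree → LTree

def size : BTree → Nat
  | .nil => 0
  | .node l r => size l + size r + 1

mutual
def rootMode : BTree → Nat → LTree × Nat
  | .nil, c => (.lnil, c)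
  | .node l r, c =>
      let (l', c1) := preMode l (c + 1)
      let (r', c2) := postMode r c1
      (.lnode c l' r', c2)
def preMode : BTree → Nat → LTree × Nat
  | .nil, c => (.lnil, c)
  | .node l r, c =>
      let (l', c1) := preMode l (c + 1)
      let (r', c2) := inMode r c1
      (.lnode c l' r', c2)
def inMode : BTree → Nat → LTree × Nat
  | .nil, c => (.lnil, c)
  | .node l r, c =>
      let (l', c1) := postMode l c
      let (r', c2) := preMode r (c1 + 1)
      (.lnode c1 l' r', c2)
def postMode : BTree → Nat → LTree × Nat
  | .nil, c => (.lnil, c)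
  | .node l r, c =>
      let (l', c1) := inMode l c
      let (r', c2) := postMode r c1
      (.lnode c2 l' r', c2 + 1)
end

/-- The multiset of all `num` labels of a labeled tree. -/
def nums : LTree → Multiset Nat
  | .lnil => 0
  | .lnode n l r => n ::ₘ (nums l + nums r)

def ival (c n : ℕ) : Multiset ℕ := (Multiset.range n).map (fun i => c + i)

lemma ival_split (c a b : ℕ) : ival c (a + b) = ival c a + ival (c + a) b := by
  simp [ival, Multiset.range_add, Multiset.map_map, Function.comp, Nat.add_assoc]

lemma ival_cons (c n : ℕ) : ival c (n + 1) = c ::ₘ ival (c + 1) n := by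
  have : n + 1 = 1 + n := by omega
  rw [this, ival_split]
  simp [ival]

lemma ival_snoc (c n : ℕ) : ival c (n + 1) = (c + n) ::ₘ ival c n := by
  rw [ival_split]
  simp [ival]
  exact add_comm _ _

lemma counters (t : BTree) (c : ℕ) :
    (rootMode t c).2 = c + size t ∧ (preMode t c).2 = c + size t ∧
    (inMode t c).2 = c + size t ∧ (postMode t c).2 = c + size t := by
  induction t generalizing c with
  | nil => simp [rootMode, preMode, inMode, postMode, size]
  | node l r ihl ihr =>
    refine ⟨?_, ?_, ?_, ?_⟩ <;>
      simp only [rootMode, preMode, inMode, postMode, size] <;>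
      simp only [(ihl _).1, (ihl _).2.1, (ihl _).2.2.1, (ihl _).2.2.2,
        (ihr _).1, (ihr _).2.1, (ihr _).2.2.1, (ihr _).2.2.2] <;> omega

theorem modes_assign_contiguous_interval (t : BTree) (c : Nat) :
    nums (rootMode t c).1 = (Multiset.range (size t)).map (fun i => c + i) ∧
    nums (preMode t c).1 = (Multiset.range (size t)).map (fun i => c + i) ∧
    nums (inMode t c).1 = (Multiset.range (size t)).map (fun i => c + i) ∧
    nums (postMode t c).1 = (Multiset.range (size t)).map (fun i => c + i) := by
  show nums (rootMode t c).1 = ival c (size t) ∧ nums (preMode t c).1 = ival c (size t) ∧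
    nums (inMode t c).1 = ival c (size t) ∧ nums (postMode t c).1 = ival c (size t)
  induction t generalizing c with
  | nil => simp [rootMode, preMode, inMode, postMode, size, nums, ival]
  | node l r ihl ihr =>
    have hl := counters l
    have hr := counters r
    refine ⟨?_, ?_, ?_, ?_⟩
    · simp only [rootMode, nums, size, (ihl _).2.1, (ihr _).2.2.2, (hl _).2.1]
      rw [ival_cons, ival_split]
    · simp only [preMode, nums, size, (ihl _).2.1, (ihr _).2.2.1, (hl _).2.1]
      rw [ival_cons, ival_split]
    · simp only [inMode, nums, size, (ihl _).2.2.2, (ihr _).2.1, (hl _).2.2.2]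
      have : size l + size r + 1 = size l + (size r + 1) := by omega
      rw [this, ival_split, ival_cons]
      rw [Multiset.add_cons]
    · simp only [postMode, nums, size, (ihl _).2.2.1, (ihr _).2.2.2, (hl _).2.2.1,
        (hr _).2.2.2]
      rw [ival_snoc, ival_split]
      congr 1
      omega

end Retreet
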